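/- arXiv:1404.6783 — 5 statements merged into one kernel-verified Lean document; each statement's English description precedes it below -/
import Mathlib

section
/- Let Λ be a free ℤ-module of rank 22 equipped with a symmetric bilinear form ⟨·,·⟩ : Λ × Λ → ℤ whose real extension to Λ ⊗ ℝ has signature (3,19,0) (that is, n₊ = 3, n₋ = 19 and the form is nondegenerate). Let h ∈ Λ with ⟨h,h⟩ > 0 and let B ∈ Λ ⊗ ℚ. Then for every positive integer N₀ there exists B' ∈ Λ ⊗ ℚ with B' − B lying in the image of Λ in Λ ⊗ ℚ, such that ⟨B',B'⟩ < 0 (for the ℚ-bilinear extension of the form), and such that every nonzero g ∈ Λ satisfying ⟨g,h⟩ = 0 and g ⊗ 1 ∈ span_ℚ{h ⊗ 1, B'} ⊆ Λ ⊗ ℚ has ⟨g,g⟩ < −N₀. -/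
open TensorProduct

/-- `nPos B` is the maximal dimension of a linear subspace on which the bilinear form `B`
is positive definite. -/
noncomputable def nPos {V : Type*} [AddCommGroup V] [Module ℝ V]
    (B : LinearMap.BilinForm ℝ V) : ℕ :=
  sSup {n : ℕ | ∃ W : Submodule ℝ V, Module.finrank ℝ W = n ∧ ∀ v ∈ W, v ≠ 0 → 0 < B v v}

/-- `nNeg B` is the maximal dimension of a linear subspace on which the bilinear form `B`
is negative definite. -/
noncomputable def nNeg {V : Type*} [AddCommGroup V] [Module ℝ V]
    (B : LinearMap.BilinForm ℝ V) : ℕ :=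
  sSup {n : ℕ | ∃ W : Submodule ℝ V, Module.finrank ℝ W = n ∧ ∀ v ∈ W, v ≠ 0 → B v v < 0}

/-- `nZero B` is the dimension of the radical `{v | ∀ w, B v w = 0}` of `B`. -/
noncomputable def nZero {V : Type*} [AddCommGroup V] [Module ℝ V]
    (B : LinearMap.BilinForm ℝ V) : ℕ :=
  Module.finrank ℝ (LinearMap.ker B)

lemma exists_nsmul_tmul {Λ : Type*} [AddCommGroup Λ] (x : ℚ ⊗[ℤ] Λ) :
    ∃ n : ℕ, 0 < n ∧ ∃ e : Λ, (n : ℚ) • x = (1 : ℚ) ⊗ₜ[ℤ] e := by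
  induction x using TensorProduct.induction_on with
  | zero => exact ⟨1, one_pos, 0, by simp⟩
  | tmul q m =>
    refine ⟨q.den, q.pos, q.num • m, ?_⟩
    rw [smul_tmul', ← smul_tmul]
    congr 1
    rw [smul_eq_mul, zsmul_eq_mul, mul_one, mul_comm, Rat.mul_den_eq_num]
  | add x y hx hy =>
    obtain ⟨n, hn, e, he⟩ := hx
    obtain ⟨m, hm, f, hf⟩ := hy
    refine ⟨n * m, Nat.mul_pos hn hm, m • e + n • f, ?_⟩
    rw [tmul_add, tmul_smul, tmul_smul, ← he, ← hf,
      ← Nat.cast_smul_eq_nsmul ℚ m ((n:ℚ) • x), ← Nat.cast_smul_eq_nsmul ℚ n ((m:ℚ) • y),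
      smul_smul, smul_smul, smul_add]
    push_cast
    rw [mul_comm (m:ℚ) (n:ℚ)]

lemma tmul_one_eq_zero {Λ : Type*} [AddCommGroup Λ] [Module.Free ℤ Λ] [Module.Finite ℤ Λ]
    {g : Λ} (h : (1 : ℚ) ⊗ₜ[ℤ] g = (0 : ℚ ⊗[ℤ] Λ)) : g = 0 := by
  set b := Module.Free.chooseBasis ℤ Λ
  apply b.repr.injective
  ext i
  have := congrArg (fun z => (b.baseChange ℚ).repr z i) h
  simp only [Module.Basis.baseChange_repr_tmul, map_zero, Finsupp.coe_zero, Pi.zero_apply] at this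
  simpa using this

lemma bilin_sum {R V : Type*} [CommRing R] [AddCommGroup V] [Module R V]
    (Q : LinearMap.BilinForm R V) {ι : Type*} [Fintype ι]
    (t s : ι → R) (u w : ι → V) :
    Q (∑ i, t i • u i) (∑ j, s j • w j) = ∑ i, ∑ j, t i * s j * Q (u i) (w j) := by
  simp only [map_sum, LinearMap.map_smul₂, LinearMap.smul_apply, map_smul,
    LinearMap.sum_apply, smul_eq_mul, Finset.mul_sum]
  rw [Finset.sum_comm]
  refine Finset.sum_congr rfl fun i _ => Finset.sum_congr rfl fun j _ => by ring

lemma exists_rat_neg {ι : Type*} [Fintype ι] (f : (ι → ℚ) → ℚ) (fR : (ι → ℝ) → ℝ)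
    (hcont : Continuous fR) (hcompat : ∀ q : ι → ℚ, fR (fun i => (q i : ℝ)) = (f q : ℝ))
    (t : ι → ℝ) (ht : fR t < 0) : ∃ q : ι → ℚ, f q < 0 := by
  have hd : Dense (Set.pi Set.univ fun _ : ι => Set.range ((↑) : ℚ → ℝ)) :=
    dense_pi Set.univ fun i _ => Rat.denseRange_cast
  have hU : IsOpen (fR ⁻¹' Set.Iio 0) := hcont.isOpen_preimage _ isOpen_Iio
  obtain ⟨x, hx2, hx1⟩ := hd.inter_open_nonempty _ hU ⟨t, ht⟩
  choose q hq using fun i => hx1 i (Set.mem_univ i)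
  have hxq : (fun i => (q i : ℝ)) = x := funext hq
  refine ⟨q, ?_⟩
  have hlt : fR x < 0 := hx2
  rw [← hxq, hcompat] at hlt
  exact_mod_cast hlt

lemma exists_nat_quad (A Bc C M : ℚ) (hC : C ≤ -1) :
    ∃ k : ℕ, A + 2 * k * Bc + k ^ 2 * C < M := by
  obtain ⟨k, hk⟩ := exists_nat_gt (|A| + 2 * |Bc| + |M|)
  have hk0 : (0 : ℚ) < k := lt_of_le_of_lt (by positivity) hk
  have h1 : (1 : ℚ) ≤ (k : ℚ) := by
    have : 0 < k := by exact_mod_cast hk0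
    exact_mod_cast this
  refine ⟨k, ?_⟩
  nlinarith [le_abs_self A, le_abs_self Bc, neg_abs_le M, abs_nonneg A, abs_nonneg Bc,
    abs_nonneg M, mul_le_mul_of_nonneg_left hC (sq_nonneg (k : ℚ)),
    mul_lt_mul_of_pos_left hk hk0,
    mul_le_mul_of_nonneg_left (le_abs_self Bc) (le_of_lt hk0),
    mul_nonneg (by linarith : (0:ℚ) ≤ (k:ℚ) - 1) (abs_nonneg A),
    mul_nonneg (by linarith : (0:ℚ) ≤ (k:ℚ) - 1) (abs_nonneg M)]

lemma exists_rat_neg_vec {Λ : Type*} [AddCommGroup Λ] [Module.Free ℤ Λ] [Module.Finite ℤ Λ]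
    (hrank : Module.finrank ℤ Λ = 22) (B : LinearMap.BilinForm ℤ Λ)
    (hneg : nNeg (B.baseChange ℝ) = 19) :
    ∃ x : ℚ ⊗[ℤ] Λ, (B.baseChange ℚ) x x < 0 := by
  classical
  set b := Module.Free.chooseBasis ℤ Λ with hb
  have hcard : Fintype.card (Module.Free.ChooseBasisIndex ℤ Λ) = 22 := by
    rw [← Module.finrank_eq_card_chooseBasisIndex]; exact hrank
  set bR : Module.Basis (Module.Free.ChooseBasisIndex ℤ Λ) ℝ (ℝ ⊗[ℤ] Λ) := b.baseChange ℝ with hbR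
  have finrankR : Module.finrank ℝ (ℝ ⊗[ℤ] Λ) = 22 := by
    rw [Module.finrank_eq_card_basis bR, hcard]
  have hneg' : sSup {n : ℕ | ∃ W : Submodule ℝ (ℝ ⊗[ℤ] Λ), Module.finrank ℝ W = n ∧
      ∀ v ∈ W, v ≠ 0 → (B.baseChange ℝ) v v < 0} = 19 := hneg
  have hbdd : BddAbove {n : ℕ | ∃ W : Submodule ℝ (ℝ ⊗[ℤ] Λ), Module.finrank ℝ W = n ∧
      ∀ v ∈ W, v ≠ 0 → (B.baseChange ℝ) v v < 0} := by
    refine ⟨22, fun n hn => ?_⟩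
    obtain ⟨W, hW, -⟩ := hn
    rw [← hW, ← finrankR]
    exact Submodule.finrank_le W
  have hne : {n : ℕ | ∃ W : Submodule ℝ (ℝ ⊗[ℤ] Λ), Module.finrank ℝ W = n ∧
      ∀ v ∈ W, v ≠ 0 → (B.baseChange ℝ) v v < 0}.Nonempty := by
    refine ⟨0, ⊥, finrank_bot ℝ _, fun v hv hv0 => absurd ?_ hv0⟩
    simpa using hv
  have hmem := Nat.sSup_mem hne hbdd
  rw [hneg'] at hmem
  obtain ⟨W, hW19, hWneg⟩ := hmem
  have hWpos : 0 < Module.finrank ℝ W := by rw [hW19]; norm_num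
  obtain ⟨x, hx0⟩ := Module.finrank_pos_iff_exists_ne_zero.mp hWpos
  have hv : (B.baseChange ℝ) (x : ℝ ⊗[ℤ] Λ) (x : ℝ ⊗[ℤ] Λ) < 0 :=
    hWneg _ x.2 (by simpa using hx0)
  set v : ℝ ⊗[ℤ] Λ := (x : ℝ ⊗[ℤ] Λ) with hvdef
  have hQbbR : ∀ i j, (B.baseChange ℝ) (bR i) (bR j) = ((B (b i) (b j) : ℤ) : ℝ) := by
    intro i j
    rw [hbR, Module.Basis.baseChange_apply, Module.Basis.baseChange_apply,
      LinearMap.BilinForm.baseChange_tmul]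
    simp [zsmul_eq_mul]
  have ht : ∑ i, ∑ j, (bR.repr v i) * (bR.repr v j) * ((B (b i) (b j) : ℤ) : ℝ) < 0 := by
    have hbs := bilin_sum (B.baseChange ℝ) (fun i => bR.repr v i) (fun i => bR.repr v i) bR bR
    rw [bR.sum_repr v] at hbs
    simp only [hQbbR] at hbs
    rw [← hbs]
    exact hv
  obtain ⟨q, hq⟩ := exists_rat_neg
    (fun q => ∑ i, ∑ j, q i * q j * ((B (b i) (b j) : ℤ) : ℚ))
    (fun t => ∑ i, ∑ j, t i * t j * ((B (b i) (b j) : ℤ) : ℝ))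
    (continuous_finset_sum _ fun i _ => continuous_finset_sum _ fun j _ =>
      ((continuous_apply i).mul (continuous_apply j)).mul continuous_const)
    (fun q => by push_cast; rfl)
    (fun i => bR.repr v i) ht
  set bQ : Module.Basis (Module.Free.ChooseBasisIndex ℤ Λ) ℚ (ℚ ⊗[ℤ] Λ) := b.baseChange ℚ with hbQ
  have hQbbQ : ∀ i j, (B.baseChange ℚ) (bQ i) (bQ j) = ((B (b i) (b j) : ℤ) : ℚ) := by
    intro i j
    rw [hbQ, Module.Basis.baseChange_apply, Module.Basis.baseChange_apply,
      LinearMap.BilinForm.baseChange_tmul]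
    simp [zsmul_eq_mul]
  refine ⟨∑ i, q i • bQ i, ?_⟩
  rw [bilin_sum (B.baseChange ℚ) q q bQ bQ]
  simp only [hQbbQ]
  exact hq

set_option maxHeartbeats 3200000 in
/-- Let `Λ` be a free `ℤ`-module of rank `22` with a symmetric integral
bilinear form whose real extension has signature `(3,19,0)`. Let `h ∈ Λ` with `⟨h,h⟩ > 0`
and `B ∈ Λ ⊗ ℚ`. Then for every positive integer `N₀` there is `B' ∈ Λ ⊗ ℚ` with
`B' − B` in the image of `Λ`, with `⟨B',B'⟩ < 0`, and such that every nonzero `g ∈ Λ` with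
`⟨g,h⟩ = 0` whose image lies in `span_ℚ {h, B'}` satisfies `⟨g,g⟩ < −N₀`. -/
theorem stmt2 {Λ : Type*} [AddCommGroup Λ] [Module.Free ℤ Λ] [Module.Finite ℤ Λ]
    (hrank : Module.finrank ℤ Λ = 22)
    (B : LinearMap.BilinForm ℤ Λ) (hsymm : ∀ x y : Λ, B x y = B y x)
    (hsig : nPos (B.baseChange ℝ) = 3 ∧ nNeg (B.baseChange ℝ) = 19 ∧
      nZero (B.baseChange ℝ) = 0)
    (h : Λ) (hh : 0 < B h h)
    (Bfield : ℚ ⊗[ℤ] Λ) (N₀ : ℕ) (hN₀ : 0 < N₀) :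
    ∃ B' : ℚ ⊗[ℤ] Λ,
      (∃ c : Λ, B' - Bfield = (1 : ℚ) ⊗ₜ[ℤ] c) ∧
      (B.baseChange ℚ) B' B' < 0 ∧
      ∀ g : Λ, g ≠ 0 → B g h = 0 →
        ((1 : ℚ) ⊗ₜ[ℤ] g) ∈
          Submodule.span ℚ ({(1 : ℚ) ⊗ₜ[ℤ] h, B'} : Set (ℚ ⊗[ℤ] Λ)) →
        B g g < -(N₀ : ℤ) := by
  classical
  set Q := B.baseChange ℚ with hQdef
  set ιh : ℚ ⊗[ℤ] Λ := (1 : ℚ) ⊗ₜ[ℤ] h with hιh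
  set b := Module.Free.chooseBasis ℤ Λ with hb
  set bQ : Module.Basis (Module.Free.ChooseBasisIndex ℤ Λ) ℚ (ℚ ⊗[ℤ] Λ) := b.baseChange ℚ with hbQ
  have hcard : Fintype.card (Module.Free.ChooseBasisIndex ℤ Λ) = 22 := by
    rw [← Module.finrank_eq_card_chooseBasisIndex]; exact hrank
  -- basic facts
  have hQtt : ∀ x y : Λ, Q ((1:ℚ) ⊗ₜ[ℤ] x) ((1:ℚ) ⊗ₜ[ℤ] y) = ((B x y : ℤ) : ℚ) := by
    intro x y
    rw [hQdef, LinearMap.BilinForm.baseChange_tmul]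
    simp [zsmul_eq_mul]
  have hQsymm : ∀ x y : ℚ ⊗[ℤ] Λ, Q x y = Q y x := by
    have hBs : LinearMap.IsSymm B := ⟨fun x y => hsymm x y⟩
    intro x y
    exact (LinearMap.BilinForm.IsSymm.baseChange ℚ hBs).eq x y
  have hreprt : ∀ (u : Λ) i, bQ.repr ((1:ℚ) ⊗ₜ[ℤ] u) i = ((b.repr u i : ℤ) : ℚ) := by
    intro u i
    rw [hbQ, Module.Basis.baseChange_repr_tmul]
    simp [zsmul_eq_mul]
  set Hq : ℚ := ((B h h : ℤ) : ℚ) with hHq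
  have hH0 : 0 < Hq := by rw [hHq]; exact_mod_cast hh
  have hHne : Hq ≠ 0 := ne_of_gt hH0
  have hQhh : Q ιh ιh = Hq := hQtt h h
  -- projection facts
  have hproj_perp : ∀ x : ℚ ⊗[ℤ] Λ, Q (x - (Q x ιh / Hq) • ιh) ιh = 0 := by
    intro x
    simp only [map_sub, map_smul, LinearMap.sub_apply, LinearMap.smul_apply, smul_eq_mul]
    rw [hQhh]
    field_simp
    ring
  have hproj_val : ∀ x : ℚ ⊗[ℤ] Λ,
      Q (x - (Q x ιh / Hq) • ιh) (x - (Q x ιh / Hq) • ιh) = Q x x - (Q x ιh)^2 / Hq := by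
    intro x
    simp only [map_sub, map_smul, LinearMap.sub_apply, LinearMap.smul_apply, smul_eq_mul]
    rw [hQhh, hQsymm ιh x]
    field_simp
    ring
  -- construct e₂
  obtain ⟨x0, hx0⟩ := exists_rat_neg_vec hrank B hsig.2.1
  set y : ℚ ⊗[ℤ] Λ := x0 - (Q x0 ιh / Hq) • ιh with hy
  have hyy : Q y y < 0 := by
    rw [hy, hproj_val x0]
    have : 0 ≤ (Q x0 ιh)^2 / Hq := div_nonneg (sq_nonneg _) (le_of_lt hH0)
    linarith
  have hyh : Q y ιh = 0 := hproj_perp x0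
  obtain ⟨n, hn, e₂, he₂⟩ := exists_nsmul_tmul y
  have hn0 : ((n:ℚ)) ≠ 0 := by positivity
  have he₂h : B e₂ h = 0 := by
    have : Q ((1:ℚ) ⊗ₜ[ℤ] e₂) ιh = 0 := by
      rw [← he₂, map_smul, LinearMap.smul_apply, hyh, smul_zero]
    rw [hQtt e₂ h] at this
    exact_mod_cast this
  have he₂e₂ : B e₂ e₂ < 0 := by
    have hlt : Q ((1:ℚ) ⊗ₜ[ℤ] e₂) ((1:ℚ) ⊗ₜ[ℤ] e₂) < 0 := by
      rw [← he₂]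
      simp only [map_smul, LinearMap.smul_apply, smul_eq_mul]
      have hnpos : (0:ℚ) < (n:ℚ) := by positivity
      exact mul_neg_of_pos_of_neg hnpos (mul_neg_of_pos_of_neg hnpos hyy)
    rw [hQtt e₂ e₂] at hlt
    exact_mod_cast hlt
  have hC : ((B e₂ e₂ : ℤ) : ℚ) ≤ -1 := by
    have h1 : B e₂ e₂ ≤ -1 := by omega
    calc ((B e₂ e₂ : ℤ) : ℚ) ≤ ((-1 : ℤ) : ℚ) := by exact_mod_cast h1
      _ = -1 := by norm_num
  have hιe₂ne : (1:ℚ) ⊗ₜ[ℤ] e₂ ≠ 0 := by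
    intro hz
    rw [hz] at he₂
    have : y = 0 := by
      have := congrArg (fun z => (n:ℚ)⁻¹ • z) he₂
      simpa [smul_smul, inv_mul_cancel₀ hn0] using this
    rw [this] at hyy
    simp at hyy
  -- construct f with image not in span of e₂
  set L : Submodule ℚ (ℚ ⊗[ℤ] Λ) := Submodule.span ℚ {(1:ℚ) ⊗ₜ[ℤ] e₂} with hL
  have hfinV : Module.finrank ℚ (ℚ ⊗[ℤ] Λ) = 22 := by
    rw [Module.finrank_eq_card_basis bQ, hcard]
  have hexU : ∃ i, (bQ i - (Q (bQ i) ιh / Hq) • ιh) ∉ L := by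
    by_contra hall
    push_neg at hall
    have hP : ∀ i, bQ i ∈ Submodule.span ℚ ({(1:ℚ) ⊗ₜ[ℤ] e₂, ιh} : Set (ℚ ⊗[ℤ] Λ)) := by
      intro i
      have h1 : (bQ i - (Q (bQ i) ιh / Hq) • ιh) ∈
          Submodule.span ℚ ({(1:ℚ) ⊗ₜ[ℤ] e₂, ιh} : Set (ℚ ⊗[ℤ] Λ)) :=
        Submodule.span_mono (Set.singleton_subset_iff.mpr (Set.mem_insert _ _)) (hall i)
      have h2 : ((Q (bQ i) ιh / Hq) • ιh) ∈
          Submodule.span ℚ ({(1:ℚ) ⊗ₜ[ℤ] e₂, ιh} : Set (ℚ ⊗[ℤ] Λ)) :=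
        Submodule.smul_mem _ _ (Submodule.subset_span (by simp))
      have := Submodule.add_mem _ h1 h2
      simpa using this
    have htop : (⊤ : Submodule ℚ (ℚ ⊗[ℤ] Λ)) ≤
        Submodule.span ℚ ({(1:ℚ) ⊗ₜ[ℤ] e₂, ιh} : Set (ℚ ⊗[ℤ] Λ)) := by
      rw [← bQ.span_eq]
      exact Submodule.span_le.mpr (Set.range_subset_iff.mpr hP)
    have h22 : (22 : ℕ) ≤ Module.finrank ℚ
        (Submodule.span ℚ ({(1:ℚ) ⊗ₜ[ℤ] e₂, ιh} : Set (ℚ ⊗[ℤ] Λ))) := by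
      calc (22:ℕ) = Module.finrank ℚ (⊤ : Submodule ℚ (ℚ ⊗[ℤ] Λ)) := by
            rw [finrank_top, hfinV]
        _ ≤ _ := Submodule.finrank_mono htop
    have hle2 : Module.finrank ℚ
        (Submodule.span ℚ ({(1:ℚ) ⊗ₜ[ℤ] e₂, ιh} : Set (ℚ ⊗[ℤ] Λ))) ≤ 2 := by
      refine le_trans (finrank_span_le_card _) ?_
      rw [Set.toFinset_insert, Set.toFinset_singleton]
      exact le_trans (Finset.card_insert_le _ _) (by simp)
    omega
  obtain ⟨i₀, hi₀⟩ := hexU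
  set yi : ℚ ⊗[ℤ] Λ := bQ i₀ - (Q (bQ i₀) ιh / Hq) • ιh with hyi
  obtain ⟨m, hm, f, hf⟩ := exists_nsmul_tmul yi
  have hm0 : ((m:ℚ)) ≠ 0 := by positivity
  have hfh : B f h = 0 := by
    have : Q ((1:ℚ) ⊗ₜ[ℤ] f) ιh = 0 := by
      rw [← hf, map_smul, LinearMap.smul_apply, hproj_perp (bQ i₀), smul_zero]
    rw [hQtt f h] at this
    exact_mod_cast this
  have hfL : (1:ℚ) ⊗ₜ[ℤ] f ∉ L := by
    intro hmem
    apply hi₀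
    have hyif : yi = (m:ℚ)⁻¹ • ((1:ℚ) ⊗ₜ[ℤ] f) := by
      rw [← hf, smul_smul, inv_mul_cancel₀ hm0, one_smul]
    rw [hyif]
    exact Submodule.smul_mem _ _ hmem
  -- construct e₁ and w
  set qB : ℚ := Q Bfield ιh with hqB
  set w₀ : ℚ ⊗[ℤ] Λ := Bfield - (qB / Hq) • ιh with hw₀
  obtain ⟨e₁, he₁h, hwnot⟩ : ∃ e₁ : Λ, B e₁ h = 0 ∧ (w₀ + (1:ℚ) ⊗ₜ[ℤ] e₁) ∉ L := by
    by_cases hw : w₀ ∈ L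
    · refine ⟨f, hfh, fun hmem => hfL ?_⟩
      have : (1:ℚ) ⊗ₜ[ℤ] f = (w₀ + (1:ℚ) ⊗ₜ[ℤ] f) - w₀ := by abel
      rw [this]
      exact Submodule.sub_mem _ hmem hw
    · exact ⟨0, by simp, by simpa [tmul_zero] using hw⟩
  set w : ℚ ⊗[ℤ] Λ := w₀ + (1:ℚ) ⊗ₜ[ℤ] e₁ with hw
  have hwh : Q w ιh = 0 := by
    rw [hw, map_add, LinearMap.add_apply]
    have h1 : Q w₀ ιh = 0 := hproj_perp Bfield
    have h2 : Q ((1:ℚ) ⊗ₜ[ℤ] e₁) ιh = 0 := by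
      rw [hQtt e₁ h, he₁h]; simp
    rw [h1, h2, add_zero]
  -- the minor functional
  set E : Module.Free.ChooseBasisIndex ℤ Λ → ℚ := fun i => bQ.repr ((1:ℚ) ⊗ₜ[ℤ] e₂) i with hE
  set Wr : Module.Free.ChooseBasisIndex ℤ Λ → ℚ := fun i => bQ.repr w i with hWr
  have hminor : ∃ i j, E j * Wr i - E i * Wr j ≠ 0 := by
    by_contra hall
    push_neg at hall
    have hEne : ∃ j₀, E j₀ ≠ 0 := by
      by_contra hE0
      push_neg at hE0
      apply hιe₂ne
      apply bQ.repr.injective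
      ext i
      simpa using hE0 i
    obtain ⟨j₀, hj₀⟩ := hEne
    apply hwnot
    have : w = (Wr j₀ / E j₀) • ((1:ℚ) ⊗ₜ[ℤ] e₂) := by
      apply bQ.repr.injective
      ext i
      rw [map_smul]
      simp only [Finsupp.smul_apply, smul_eq_mul]
      have := hall i j₀
      show Wr i = (Wr j₀ / E j₀) * E i
      field_simp
      linarith [hall i j₀]
    rw [this]
    exact Submodule.smul_mem _ _ (Submodule.subset_span (by simp))
  obtain ⟨i, j, hμ⟩ := hminor
  set μ : ℚ := E j * Wr i - E i * Wr j with hμdef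
  -- choose k
  set A : ℚ := Q w w with hA
  set Bc : ℚ := Q w ((1:ℚ) ⊗ₜ[ℤ] e₂) with hBc
  set C : ℚ := ((B e₂ e₂ : ℤ) : ℚ) with hCdef
  have hQe₂e₂ : Q ((1:ℚ) ⊗ₜ[ℤ] e₂) ((1:ℚ) ⊗ₜ[ℤ] e₂) = C := hQtt e₂ e₂
  have hQe₂h : Q ((1:ℚ) ⊗ₜ[ℤ] e₂) ιh = 0 := by
    rw [hQtt e₂ h, he₂h]; simp
  set M : ℚ := min (-(N₀:ℚ) * μ^2) (-(qB^2 / Hq)) with hM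
  obtain ⟨k, hk⟩ := exists_nat_quad A Bc C M hC
  -- define B'
  set B' : ℚ ⊗[ℤ] Λ := Bfield + (1:ℚ) ⊗ₜ[ℤ] (e₁ + k • e₂) with hB'
  set v : ℚ ⊗[ℤ] Λ := w + (k:ℚ) • ((1:ℚ) ⊗ₜ[ℤ] e₂) with hv
  have hveq : B' = v + (qB / Hq) • ιh := by
    rw [hB', hv, hw, hw₀, tmul_add, tmul_smul, Nat.cast_smul_eq_nsmul ℚ k]
    abel
  have hQvh : Q v ιh = 0 := by
    rw [hv, map_add, LinearMap.add_apply, map_smul, LinearMap.smul_apply, hwh, hQe₂h]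
    simp
  have hQvv : Q v v = A + 2 * k * Bc + k^2 * C := by
    rw [hv]
    simp only [map_add, map_smul, LinearMap.add_apply, LinearMap.smul_apply, smul_eq_mul]
    rw [hQsymm ((1:ℚ) ⊗ₜ[ℤ] e₂) w, hQe₂e₂, ← hA, ← hBc]
    ring
  have hQvvM : Q v v < M := by rw [hQvv]; exact hk
  have hQB'h : Q B' ιh = qB := by
    rw [hveq, map_add, LinearMap.add_apply, map_smul, LinearMap.smul_apply, hQvh, hQhh]
    rw [zero_add, smul_eq_mul]
    field_simp
  have hQB'B' : Q B' B' < 0 := by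
    rw [hveq]
    simp only [map_add, map_smul, LinearMap.add_apply, LinearMap.smul_apply, smul_eq_mul]
    rw [hQvh, hQsymm ιh v, hQvh, hQhh]
    have hQvvlt : Q v v < -(qB^2 / Hq) := lt_of_lt_of_le hQvvM (min_le_right _ _)
    have hqq : Q v v + qB / Hq * 0 + qB / Hq * (0 + qB / Hq * Hq) = Q v v + qB^2 / Hq := by
      field_simp
      ring
    rw [hqq]
    linarith
  refine ⟨B', ⟨e₁ + k • e₂, by rw [hB', add_sub_cancel_left]⟩, hQB'B', ?_⟩
  intro g hg0 hgh hspan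
  rw [Submodule.mem_span_pair] at hspan
  obtain ⟨α, β, hαβ⟩ := hspan
  have hgQh : Q ((1:ℚ) ⊗ₜ[ℤ] g) ιh = 0 := by
    rw [hQtt g h, hgh]; simp
  have hcoef : α * Hq + β * qB = 0 := by
    have := congrArg (fun z => Q z ιh) hαβ
    simp only [map_add, map_smul, LinearMap.add_apply, LinearMap.smul_apply,
      smul_eq_mul] at this
    rw [hQhh, hQB'h, hgQh] at this
    linarith
  have hβ0 : β ≠ 0 := by
    intro hb0
    rw [hb0, zero_mul, add_zero] at hcoef
    have hα0 : α = 0 := by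
      rcases mul_eq_zero.mp hcoef with h' | h'
      · exact h'
      · exact absurd h' hHne
    rw [hb0, hα0] at hαβ
    simp at hαβ
    exact hg0 (tmul_one_eq_zero hαβ.symm)
  have hgv : (1:ℚ) ⊗ₜ[ℤ] g = β • v := by
    have hs : α + β * (qB / Hq) = 0 := by
      field_simp
      linarith
    rw [← hαβ, hveq]
    calc α • ιh + β • (v + (qB / Hq) • ιh)
        = β • v + (α + β * (qB / Hq)) • ιh := by
          rw [smul_add, smul_smul, add_smul]; abel
      _ = β • v := by rw [hs, zero_smul, add_zero]
  have hVrE : ∀ l, bQ.repr v l = Wr l + (k:ℚ) * E l := by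
    intro l
    rw [hv, map_add, map_smul]
    simp [hWr, hE]
  have hμv : E j * bQ.repr v i - E i * bQ.repr v j = μ := by
    rw [hVrE i, hVrE j, hμdef]; ring
  set z : ℤ := (b.repr e₂ j) * (b.repr g i) - (b.repr e₂ i) * (b.repr g j) with hz
  have hEcast : ∀ l, E l = ((b.repr e₂ l : ℤ) : ℚ) := fun l => hreprt e₂ l
  have hzcast : ((z : ℤ) : ℚ) = β * μ := by
    have hgr : ∀ l, bQ.repr ((1:ℚ) ⊗ₜ[ℤ] g) l = β * bQ.repr v l := by
      intro l
      rw [hgv, map_smul]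
      simp
    have h1 : ((z : ℤ) : ℚ) = E j * bQ.repr ((1:ℚ) ⊗ₜ[ℤ] g) i
        - E i * bQ.repr ((1:ℚ) ⊗ₜ[ℤ] g) j := by
      rw [hz, hEcast i, hEcast j, hreprt g i, hreprt g j]
      push_cast
      ring
    rw [h1, hgr i, hgr j, ← hμv]
    ring
  have hzQ0 : ((z : ℤ) : ℚ) ≠ 0 := by
    rw [hzcast]; exact mul_ne_zero hβ0 hμ
  have hz0 : z ≠ 0 := fun hh => hzQ0 (by rw [hh]; norm_num)
  have hone : (1:ℚ) ≤ |β * μ| := by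
    rw [← hzcast]
    have h1 : (1:ℤ) ≤ |z| := Int.one_le_abs hz0
    calc (1:ℚ) = ((1:ℤ):ℚ) := by norm_num
      _ ≤ ((|z|:ℤ):ℚ) := by exact_mod_cast h1
      _ = |((z:ℤ):ℚ)| := by push_cast; ring
  have honesq : 1 ≤ (β * μ)^2 := by
    rw [← sq_abs]
    nlinarith [hone, abs_nonneg (β * μ)]
  have hgg : ((B g g : ℤ) : ℚ) = β^2 * Q v v := by
    rw [← hQtt g g, hgv]
    simp only [map_smul, LinearMap.smul_apply, smul_eq_mul]
    ring
  have hQvvlt : Q v v < -(N₀:ℚ) * μ^2 := lt_of_lt_of_le hQvvM (min_le_left _ _)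
  have hβsq : 0 < β^2 := by positivity
  have hfinal : ((B g g : ℤ) : ℚ) < -(N₀:ℚ) := by
    rw [hgg]
    nlinarith [mul_lt_mul_of_pos_left hQvvlt hβsq, hN₀]
  have hcast2 : ((B g g : ℤ) : ℚ) < ((-(N₀:ℤ) : ℤ) : ℚ) := by push_cast; linarith
  exact_mod_cast hcast2
end

section
/- Let Λ be an even ℤ-lattice, i.e., a ℤ-module with a symmetric bilinear form ⟨·,·⟩ : Λ × Λ → ℤ such that ⟨x,x⟩ is even for every x ∈ Λ. Let v_p ∈ Λ with ⟨v_p, v_p⟩ = 2 and set v := 2·v_p. Suppose v = a + b with ⟨a,a⟩ ≥ 0, ⟨b,b⟩ ≥ 0 and ⟨a,b⟩ > 2. Then necessarily ⟨a,b⟩ = 4, ⟨a,a⟩ = ⟨b,b⟩ = 0, ⟨v,a⟩ = ⟨v,b⟩ = 4, and the class s := v_p − a is spherical with ⟨s, v⟩ = 0. (This is the numerical content of the lemma that, for a Mukai vector of O'Grady type, no flopping wall arises from a decomposition of v into a sum of two positive classes: any such decomposition with ⟨a,b⟩ > 2 forces a spherical class orthogonal to v.) -/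
/-- Let `Λ` be an even lattice, `v_p ∈ Λ` with `⟨v_p,v_p⟩ = 2` and
`v := 2 • v_p`. If `v = a + b` with `⟨a,a⟩ ≥ 0`, `⟨b,b⟩ ≥ 0` and `⟨a,b⟩ > 2`, then
`⟨a,b⟩ = 4`, `⟨a,a⟩ = ⟨b,b⟩ = 0`, `⟨v,a⟩ = ⟨v,b⟩ = 4`, and `s := v_p − a` is spherical
with `⟨s,v⟩ = 0`. -/
theorem stmt6 {Λ : Type*} [AddCommGroup Λ]
    (B : LinearMap.BilinForm ℤ Λ) (hsymm : ∀ x y : Λ, B x y = B y x)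
    (heven : ∀ x : Λ, Even (B x x))
    (vp a b : Λ) (hvp : B vp vp = 2) (hsum : 2 • vp = a + b)
    (ha : 0 ≤ B a a) (hb : 0 ≤ B b b) (hab : 2 < B a b) :
    B a b = 4 ∧ B a a = 0 ∧ B b b = 0 ∧
    B (2 • vp) a = 4 ∧ B (2 • vp) b = 4 ∧
    B (vp - a) (vp - a) = -2 ∧ B (vp - a) (2 • vp) = 0 := by
  have hba : B b a = B a b := hsymm b a
  have hva : B vp a = B a vp := hsymm vp a
  -- ⟨v,v⟩ = 8
  have h8 : B a a + 2 * B a b + B b b = 8 := by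
    have : B (2 • vp) (2 • vp) = 8 := by
      rw [two_smul]
      simp [map_add, LinearMap.add_apply, hvp]
    rw [hsum] at this
    simp [map_add, LinearMap.add_apply, hba] at this
    linarith
  -- 2 ⟨vp,a⟩ = ⟨a,a⟩ + ⟨a,b⟩
  have hvpa : 2 * B vp a = B a a + B a b := by
    have : B (2 • vp) a = B a a + B b a := by
      rw [hsum]; simp [map_add, LinearMap.add_apply]
    rw [two_smul, map_add, LinearMap.add_apply, hba] at this
    linarith
  -- ⟨vp - a, vp - a⟩ = 2 - ⟨a,b⟩
  have hs : B (vp - a) (vp - a) = 2 - B a b := by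
    simp only [map_sub, LinearMap.sub_apply, hvp]
    rw [hva] at hvpa; linarith
  -- ⟨a,b⟩ even
  have habe : Even (B a b) := by
    have := heven (vp - a)
    rw [hs] at this
    rcases this with ⟨k, hk⟩
    exact ⟨1 - k, by omega⟩
  have hab4 : B a b = 4 := by
    rcases habe with ⟨k, hk⟩; omega
  have haa : B a a = 0 := by omega
  have hbb : B b b = 0 := by omega
  refine ⟨hab4, haa, hbb, ?_, ?_, ?_, ?_⟩
  · rw [hsum]; simp [map_add, LinearMap.add_apply, hba]; omega
  · rw [hsum]; simp [map_add, LinearMap.add_apply]; omega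
  · rw [hs]; omega
  · rw [two_smul]
    simp only [map_sub, LinearMap.sub_apply, map_add, hvp]
    rw [← hva]; omega
end

section
/- Fix a positive integer d and equip ℤ³ with the Mukai pairing ⟨(r,c,a),(r',c',a')⟩ = 2d·c·c' − r·a' − r'·a; set v := (2,0,−2). A class s ∈ ℤ³ satisfies ⟨s,s⟩ = −2 and ⟨s,v⟩ = 4 if and only if there exist integers x, y with x² − d·y² = 2 and s = (x+1, −y, x−1). (Flopping walls for v of the second kind are governed by the Pell-type equation x² − d·y² = 2.) -/
/-- The Mukai pairing on the algebraic Mukai lattice `ℤ³` of a K3 surface with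
`Pic(X) = ℤ·H`, `H² = 2d`: `⟨(r,c,a),(r',c',a')⟩ = 2d·c·c' − r·a' − r'·a`. -/
def mukai (d : ℤ) (u w : ℤ × ℤ × ℤ) : ℤ :=
  2 * d * u.2.1 * w.2.1 - u.1 * w.2.2 - w.1 * u.2.2

/-- For `v = (2,0,−2)`, a class `s` is spherical with `⟨s,v⟩ = 4`
(a flopping wall of the second kind) if and only if `s = (x+1, −y, x−1)` for a solution
of `x² − d·y² = 2`. -/
theorem stmt10 (d : ℤ) (hd : 0 < d) (s : ℤ × ℤ × ℤ) :
    (mukai d s s = -2 ∧ mukai d s (2, 0, -2) = 4) ↔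
      ∃ x y : ℤ, x ^ 2 - d * y ^ 2 = 2 ∧ s = (x + 1, -y, x - 1) := by
  obtain ⟨r, c, a⟩ := s
  simp only [mukai, Prod.mk.injEq]
  constructor
  · rintro ⟨h1, h2⟩
    have ha : a = r - 2 := by linarith
    subst ha
    exact ⟨r - 1, -c, by nlinarith, by ring, by ring, by ring⟩
  · rintro ⟨x, y, hxy, hr, hc, ha⟩
    subst hr hc ha
    constructor <;> nlinarith
end

section
/- Equip ℤ³ with the Mukai pairing for d = 1, i.e., ⟨(r,c,a),(r',c',a')⟩ = 2·c·c' − r·a' − r'·a, and set v := (2,0,−2). Then there is no class s ∈ ℤ³ with ⟨s,s⟩ = −2 and ⟨s,v⟩ = 4, and the classes s ∈ ℤ³ with ⟨s,s⟩ = −2 and ⟨s,v⟩ = 2 are exactly (2,1,1), (2,−1,1), (−1,1,−2) and (−1,−1,−2). -/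
/-- For `d = 1` and `v = (2,0,−2)`: there is no spherical class `s` with
`⟨s,v⟩ = 4`, and the spherical classes `s` with `⟨s,v⟩ = 2` are exactly `(2,1,1)`,
`(2,−1,1)`, `(−1,1,−2)` and `(−1,−1,−2)`. -/
theorem stmt16 :
    (¬ ∃ s : ℤ × ℤ × ℤ, mukai 1 s s = -2 ∧ mukai 1 s (2, 0, -2) = 4) ∧
    (∀ s : ℤ × ℤ × ℤ, (mukai 1 s s = -2 ∧ mukai 1 s (2, 0, -2) = 2) ↔
      (s = (2, 1, 1) ∨ s = (2, -1, 1) ∨ s = (-1, 1, -2) ∨ s = (-1, -1, -2))) := by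
  constructor
  · rintro ⟨⟨r, c, a⟩, h1, h2⟩
    simp only [mukai] at h1 h2
    have hr : r = a + 2 := by linarith
    subst hr
    have hc : c ^ 2 - (a + 1) ^ 2 = -2 := by ring_nf at h1 ⊢; linarith
    have h4 := congrArg (fun z : ℤ => (z : ZMod 4)) hc
    push_cast at h4
    revert h4
    generalize (c : ZMod 4) = x
    generalize (a : ZMod 4) = y
    revert x y
    decide
  · rintro ⟨r, c, a⟩
    constructor
    · rintro ⟨h1, h2⟩
      simp only [mukai] at h1 h2
      have hr : r = a + 1 := by linarith
      subst hr
      set t : ℤ := 2 * a + 1 - 2 * c with ht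
      have hxy : t * (2 * a + 1 + 2 * c) = 5 := by ring_nf; nlinarith [h1]
      have hd : t ∣ 5 := ⟨_, hxy.symm⟩
      have hb1 : t ≤ 5 := Int.le_of_dvd (by norm_num) hd
      have hb2 : -5 ≤ t := by
        have := Int.le_of_dvd (show (0:ℤ) < 5 by norm_num) ((neg_dvd).mpr hd)
        linarith
      simp only [Prod.mk.injEq]
      interval_cases t <;> omega
    · rintro (h | h | h | h) <;> simp_all [mukai]
end

section
/- Equip ℤ³ with the Mukai pairing for d = 2, i.e., ⟨(r,c,a),(r',c',a')⟩ = 4·c·c' − r·a' − r'·a, and set v := (2,0,−2). Then there is no class s ∈ ℤ³ with ⟨s,s⟩ = −2 and ⟨s,v⟩ = 2, while the class s = (3,−1,1) satisfies ⟨s,s⟩ = −2 and ⟨s,v⟩ = 4. -/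
/-- For `d = 2` and `v = (2,0,−2)`: there is no spherical class `s` with
`⟨s,v⟩ = 2`, while `s = (3,−1,1)` is spherical with `⟨s,v⟩ = 4`. -/
theorem stmt17 :
    (¬ ∃ s : ℤ × ℤ × ℤ, mukai 2 s s = -2 ∧ mukai 2 s (2, 0, -2) = 2) ∧
    (mukai 2 (3, -1, 1) (3, -1, 1) = -2 ∧ mukai 2 (3, -1, 1) (2, 0, -2) = 4) := by
  refine ⟨?_, by norm_num [mukai], by norm_num [mukai]⟩
  rintro ⟨⟨r, c, a⟩, h1, h2⟩
  simp only [mukai] at h1 h2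
  have hr : r = a + 1 := by ring_nf at h2; omega
  subst hr
  obtain ⟨t, ht⟩ := Int.even_mul_succ_self a
  have h3 : 4 * (c * c) = 4 * t - 2 := by linear_combination h1 + 2 * ht
  generalize c * c = x at h3
  omega
end
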